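/- A convex cone C ⊆ Q^n is polyhedral (an intersection of finitely many half-spaces {x | aᵢᵀx ≤ 0}) if and only if it is finitely generated (equal to the set of nonnegative linear combinations of finitely many vectors). -/

import Mathlib

open Matrix Finset

lemma sum_ite_mul {ι : Type} [Fintype ι] [DecidableEq ι] (a : ℚ) (i : ι) (r : ι → ℚ) :
    (∑ i', (if i' = i then a else 0) * r i') = a * r i := by
  rw [Finset.sum_eq_single i]
  · simp
  · intro b _ hb; simp [hb]
  · simp

lemma mul_neg_div (a b : ℚ) (hb : b ≠ 0) : b * (-a / b) = -a := by
  rw [mul_comm, div_mul_cancel₀ _ hb]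

lemma fm_one {ι : Type} [Fintype ι] (c : ι → ℚ) :
    ∃ (κ : Type) (_ : Fintype κ) (p : κ → ι → ℚ),
      ∀ r : ι → ℚ, (∃ t : ℚ, ∀ i, r i + c i * t ≤ 0) ↔ ∀ j, ∑ i, p j i * r i ≤ 0 := by
  classical
  refine ⟨{i : ι // c i = 0} ⊕ ({i : ι // 0 < c i} × {i : ι // c i < 0}), inferInstance,
    fun j => match j with
      | Sum.inl ⟨i, _⟩ => fun i' => if i' = i then 1 else 0
      | Sum.inr (⟨i, _⟩, ⟨j, _⟩) => fun i' =>
          (if i' = i then -(c j) else 0) + (if i' = j then c i else 0), fun r => ?_⟩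
  have hzero : ∀ (i : ι), (∑ i', (if i' = i then (1:ℚ) else 0) * r i') = r i := by
    intro i; rw [sum_ite_mul]; ring
  have hpair : ∀ (i j : ι),
      (∑ i', ((if i' = i then -(c j) else 0) + (if i' = j then c i else 0)) * r i')
        = -(c j) * r i + c i * r j := by
    intro i j
    have : ∀ i', ((if i' = i then -(c j) else 0) + (if i' = j then c i else 0)) * r i'
        = (if i' = i then -(c j) else 0) * r i' + (if i' = j then c i else 0) * r i' := by
      intro i'; ring
    simp only [this, Finset.sum_add_distrib, sum_ite_mul]
  constructor
  · rintro ⟨t, ht⟩ j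
    match j with
    | Sum.inl ⟨i, hi⟩ =>
      rw [hzero]
      have := ht i; rw [hi] at this; linarith
    | Sum.inr (⟨i, hi⟩, ⟨j, hj⟩) =>
      rw [hpair]
      nlinarith [ht i, ht j, hi, hj]
  · intro h
    set P : Finset ι := Finset.univ.filter (fun i => 0 < c i) with hPdef
    set N : Finset ι := Finset.univ.filter (fun i => c i < 0) with hNdef
    have hub : ∀ i ∈ P, ∀ j ∈ N, -(r j) / c j ≤ -(r i) / c i := by
      intro i hiP j hjN
      have hi : 0 < c i := (Finset.mem_filter.mp hiP).2
      have hj : c j < 0 := (Finset.mem_filter.mp hjN).2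
      have key := h (Sum.inr (⟨i, hi⟩, ⟨j, hj⟩))
      rw [hpair] at key
      have e1 : -(r j) / c j = r j / (-(c j)) := by rw [div_neg, neg_div]
      rw [e1, div_le_div_iff₀ (by linarith) hi]
      nlinarith [key]
    by_cases hP : P.Nonempty
    · refine ⟨P.inf' hP (fun i => -(r i) / c i), fun i => ?_⟩
      rcases lt_trichotomy (c i) 0 with hci | hci | hci
      · have hiN : i ∈ N := Finset.mem_filter.mpr ⟨Finset.mem_univ i, hci⟩
        have hle : -(r i) / c i ≤ P.inf' hP (fun i' => -(r i') / c i') :=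
          Finset.le_inf' hP _ (fun i' hi' => hub i' hi' i hiN)
        have hmul : c i * (P.inf' hP (fun i' => -(r i') / c i')) ≤ c i * (-(r i) / c i) :=
          mul_le_mul_of_nonpos_left hle (le_of_lt hci)
        rw [mul_neg_div _ _ (ne_of_lt hci)] at hmul
        linarith
      · rw [hci]; have := h (Sum.inl ⟨i, hci⟩); rw [hzero] at this; linarith
      · have hiP : i ∈ P := Finset.mem_filter.mpr ⟨Finset.mem_univ i, hci⟩
        have hle : P.inf' hP (fun i' => -(r i') / c i') ≤ -(r i) / c i :=
          Finset.inf'_le _ hiP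
        have hmul : c i * (P.inf' hP (fun i' => -(r i') / c i')) ≤ c i * (-(r i) / c i) :=
          mul_le_mul_of_nonneg_left hle (le_of_lt hci)
        rw [mul_neg_div _ _ (ne_of_gt hci)] at hmul
        linarith
    · by_cases hN : N.Nonempty
      · refine ⟨N.sup' hN (fun i => -(r i) / c i), fun i => ?_⟩
        rcases lt_trichotomy (c i) 0 with hci | hci | hci
        · have hiN : i ∈ N := Finset.mem_filter.mpr ⟨Finset.mem_univ i, hci⟩
          have hle : -(r i) / c i ≤ N.sup' hN (fun i' => -(r i') / c i') :=
            Finset.le_sup' (f := fun i' => -(r i') / c i') hiN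
          have hmul : c i * (N.sup' hN (fun i' => -(r i') / c i')) ≤ c i * (-(r i) / c i) :=
            mul_le_mul_of_nonpos_left hle (le_of_lt hci)
          rw [mul_neg_div _ _ (ne_of_lt hci)] at hmul
          linarith
        · rw [hci]; have := h (Sum.inl ⟨i, hci⟩); rw [hzero] at this; linarith
        · exact absurd (Finset.mem_filter.mpr ⟨Finset.mem_univ i, hci⟩)
            (fun hh => hP ⟨i, hh⟩)
      · refine ⟨0, fun i => ?_⟩
        rcases lt_trichotomy (c i) 0 with hci | hci | hci
        · exact absurd (Finset.mem_filter.mpr ⟨Finset.mem_univ i, hci⟩)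
            (fun hh => hN ⟨i, hh⟩)
        · rw [hci]; have := h (Sum.inl ⟨i, hci⟩); rw [hzero] at this; linarith
        · exact absurd (Finset.mem_filter.mpr ⟨Finset.mem_univ i, hci⟩)
            (fun hh => hP ⟨i, hh⟩)

lemma fm_many : ∀ (k : ℕ) {ι : Type} [Fintype ι] (c : ι → Fin k → ℚ),
    ∃ (κ : Type) (_ : Fintype κ) (p : κ → ι → ℚ),
      ∀ r : ι → ℚ,
        (∃ μ : Fin k → ℚ, ∀ i, r i + c i ⬝ᵥ μ ≤ 0) ↔ ∀ j, ∑ i, p j i * r i ≤ 0 := by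
  intro k
  induction k with
  | zero =>
    intro ι _ c
    classical
    refine ⟨ι, inferInstance, fun j i' => if i' = j then 1 else 0, fun r => ?_⟩
    have : ∀ j, (∑ i', (if i' = j then (1:ℚ) else 0) * r i') = r j := by
      intro j; rw [sum_ite_mul]; ring
    simp only [this]
    constructor
    · rintro ⟨μ, hμ⟩ j
      have := hμ j
      simpa using this
    · intro h
      exact ⟨fun l => l.elim0, fun i => by simpa using h i⟩
  | succ k ih =>
    intro ι _ c
    classical
    set d : ι → ℚ := fun i => c i (Fin.last k) with hd
    set c' : ι → Fin k → ℚ := fun i l => c i l.castSucc with hc'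
    obtain ⟨κ₁, _, p₁, h₁⟩ := fm_one d
    set C₂ : κ₁ → Fin k → ℚ := fun j l => ∑ i, p₁ j i * c' i l with hC₂
    obtain ⟨κ₂, _, p₂, h₂⟩ := ih (ι := κ₁) C₂
    refine ⟨κ₂, inferInstance, fun m i => ∑ j, p₂ m j * p₁ j i, fun r => ?_⟩
    have dsnoc : ∀ (i : ι) (μ' : Fin k → ℚ) (t : ℚ),
        c i ⬝ᵥ (Fin.snoc μ' t) = c' i ⬝ᵥ μ' + d i * t := by
      intro i μ' t
      simp only [dotProduct]
      rw [Fin.sum_univ_castSucc]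
      simp [hc', hd]
    have stepA : (∃ μ : Fin (k+1) → ℚ, ∀ i, r i + c i ⬝ᵥ μ ≤ 0) ↔
        ∃ μ' : Fin k → ℚ, ∃ t : ℚ, ∀ i, (r i + c' i ⬝ᵥ μ') + d i * t ≤ 0 := by
      constructor
      · rintro ⟨μ, hμ⟩
        refine ⟨Fin.init μ, μ (Fin.last k), fun i => ?_⟩
        have hμeq : Fin.snoc (Fin.init μ) (μ (Fin.last k)) = μ := Fin.snoc_init_self μ
        have h0 := hμ i
        rw [← hμeq, dsnoc] at h0
        linarith
      · rintro ⟨μ', t, hμ⟩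
        refine ⟨Fin.snoc μ' t, fun i => ?_⟩
        rw [dsnoc]
        linarith [hμ i]
    have stepC : ∀ (j : κ₁) (μ' : Fin k → ℚ),
        (∑ i, p₁ j i * (r i + c' i ⬝ᵥ μ'))
          = (∑ i, p₁ j i * r i) + C₂ j ⬝ᵥ μ' := by
      intro j μ'
      simp only [dotProduct, hC₂, mul_add, Finset.sum_add_distrib, Finset.mul_sum,
        Finset.sum_mul]
      congr 1
      rw [Finset.sum_comm]
      congr 1; funext l; congr 1; funext i; ring
    have stepD : ∀ (m : κ₂),
        (∑ j, p₂ m j * ∑ i, p₁ j i * r i) = ∑ i, (∑ j, p₂ m j * p₁ j i) * r i := by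
      intro m
      simp only [Finset.mul_sum, Finset.sum_mul, mul_assoc]
      rw [Finset.sum_comm]
    rw [stepA]
    constructor
    · rintro ⟨μ', t, hμ⟩ m
      rw [← stepD]
      have hAll : ∀ j, (∑ i, p₁ j i * r i) + C₂ j ⬝ᵥ μ' ≤ 0 := by
        intro j
        rw [← stepC]
        exact ((h₁ (fun i => r i + c' i ⬝ᵥ μ')).mp ⟨t, hμ⟩) j
      exact (h₂ (fun j => ∑ i, p₁ j i * r i)).mp ⟨μ', hAll⟩ m
    · intro hm
      obtain ⟨μ', hμ'⟩ := (h₂ (fun j => ∑ i, p₁ j i * r i)).mpr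
        (fun m => by rw [stepD]; exact hm m)
      obtain ⟨t, ht⟩ := (h₁ (fun i => r i + c' i ⬝ᵥ μ')).mpr
        (fun j => by rw [stepC]; exact hμ' j)
      exact ⟨μ', t, ht⟩
lemma dot_combo {n : ℕ} {ι : Type} [Fintype ι] (w : Fin n → ℚ) (lam : ι → ℚ)
    (v : ι → (Fin n → ℚ)) :
    w ⬝ᵥ (∑ i, lam i • v i) = ∑ i, lam i * (w ⬝ᵥ v i) := by
  simp only [dotProduct, Finset.sum_apply, Pi.smul_apply, smul_eq_mul, Finset.mul_sum]
  rw [Finset.sum_comm]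
  apply Finset.sum_congr rfl
  intros; apply Finset.sum_congr rfl; intros; ring

lemma gen_mem {n : ℕ} {ι : Type} [Fintype ι] (v : ι → (Fin n → ℚ)) (i₀ : ι) :
    ∃ lam : ι → ℚ, (∀ i, 0 ≤ lam i) ∧ v i₀ = ∑ i, lam i • v i := by
  classical
  refine ⟨fun i => if i = i₀ then 1 else 0, fun i => by positivity, ?_⟩
  rw [Finset.sum_eq_single i₀]
  · simp
  · intro b _ hb; simp [hb]
  · simp

lemma cone_reindex {n : ℕ} {κ : Type} [Fintype κ] (b : κ → Fin n → ℚ) (x : Fin n → ℚ) :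
    (∃ lam : Fin (Fintype.card κ) → ℚ, (∀ i, 0 ≤ lam i) ∧
        x = ∑ i, lam i • b ((Fintype.equivFin κ).symm i)) ↔
      (∃ lam : κ → ℚ, (∀ j, 0 ≤ lam j) ∧ x = ∑ j, lam j • b j) := by
  set e := Fintype.equivFin κ
  constructor
  · rintro ⟨lam, hlam, hx⟩
    refine ⟨fun j => lam (e j), fun j => hlam (e j), ?_⟩
    rw [hx]
    refine Eq.symm ?_
    calc ∑ j : κ, lam (e j) • b j
        = ∑ j : κ, lam (e j) • b (e.symm (e j)) := by simp
      _ = ∑ i, lam i • b (e.symm i) := Equiv.sum_comp e (fun i => lam i • b (e.symm i))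
  · rintro ⟨lam, hlam, hx⟩
    refine ⟨fun i => lam (e.symm i), fun i => hlam (e.symm i), ?_⟩
    rw [hx]
    exact (Equiv.sum_comp e.symm (fun j => lam j • b j)).symm

lemma fg_poly {n k : ℕ} (v : Fin k → (Fin n → ℚ)) :
    ∃ (κ : Type) (_ : Fintype κ) (b : κ → (Fin n → ℚ)),
      ∀ x : Fin n → ℚ,
        (∃ lam : Fin k → ℚ, (∀ i, 0 ≤ lam i) ∧ x = ∑ i, lam i • v i) ↔
          ∀ j, b j ⬝ᵥ x ≤ 0 := by
  classical
  set ι := (Fin n ⊕ Fin n) ⊕ Fin k with hι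
  set c : ι → Fin k → ℚ := fun i => match i with
    | Sum.inl (Sum.inl e) => fun i' => -(v i' e)
    | Sum.inl (Sum.inr e) => fun i' => v i' e
    | Sum.inr i => fun i' => if i' = i then -1 else 0 with hc
  obtain ⟨κ, _, p, hp⟩ := fm_many k c
  refine ⟨κ, inferInstance, fun j => fun e => p j (Sum.inl (Sum.inl e)) - p j (Sum.inl (Sum.inr e)),
    fun x => ?_⟩
  set r : ι → ℚ := fun i => match i with
    | Sum.inl (Sum.inl e) => x e
    | Sum.inl (Sum.inr e) => -(x e)
    | Sum.inr _ => 0 with hr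
  have hsum_apply : ∀ (lam : Fin k → ℚ) (e : Fin n),
      (∑ i, lam i • v i) e = ∑ i, lam i * v i e := by
    intro lam e
    simp [Finset.sum_apply]
  have claim1 : (∃ lam : Fin k → ℚ, (∀ i, 0 ≤ lam i) ∧ x = ∑ i, lam i • v i) ↔
      (∃ μ : Fin k → ℚ, ∀ i, r i + c i ⬝ᵥ μ ≤ 0) := by
    constructor
    · rintro ⟨lam, hlam, hx⟩
      refine ⟨lam, fun i => ?_⟩
      match i with
      | Sum.inl (Sum.inl e) =>
        have : x e = ∑ i, lam i * v i e := by rw [hx, hsum_apply]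
        simp only [hr, hc, dotProduct]
        rw [this]
        have : ∀ i', -(v i' e) * lam i' = -(lam i' * v i' e) := fun i' => by ring
        simp only [this, Finset.sum_neg_distrib]
        linarith
      | Sum.inl (Sum.inr e) =>
        have : x e = ∑ i, lam i * v i e := by rw [hx, hsum_apply]
        simp only [hr, hc, dotProduct]
        rw [this]
        have : ∀ i', v i' e * lam i' = lam i' * v i' e := fun i' => by ring
        simp only [this]
        linarith
      | Sum.inr i =>
        simp only [hr, hc, dotProduct, sum_ite_mul]
        have := hlam i
        linarith
    · rintro ⟨μ, hμ⟩
      refine ⟨μ, fun i => ?_, ?_⟩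
      · have := hμ (Sum.inr i)
        simp only [hr, hc, dotProduct, sum_ite_mul] at this
        linarith
      · funext e
        have h1 := hμ (Sum.inl (Sum.inl e))
        have h2 := hμ (Sum.inl (Sum.inr e))
        simp only [hr, hc, dotProduct] at h1 h2
        rw [hsum_apply]
        have e1 : ∀ i', -(v i' e) * μ i' = -(μ i' * v i' e) := fun i' => by ring
        have e2 : ∀ i', v i' e * μ i' = μ i' * v i' e := fun i' => by ring
        simp only [e1, Finset.sum_neg_distrib] at h1
        simp only [e2] at h2
        linarith
  have claim2 : ∀ j, (∑ i, p j i * r i)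
      = (fun e => p j (Sum.inl (Sum.inl e)) - p j (Sum.inl (Sum.inr e))) ⬝ᵥ x := by
    intro j
    rw [show (∑ i, p j i * r i) = ∑ i : (Fin n ⊕ Fin n) ⊕ Fin k, p j i * r i from rfl]
    rw [Fintype.sum_sum_type, Fintype.sum_sum_type]
    simp only [hr]
    simp only [dotProduct, mul_zero, Finset.sum_const_zero, add_zero]
    rw [← Finset.sum_add_distrib]
    apply Finset.sum_congr rfl
    intros; ring
  rw [claim1, hp r]
  constructor
  · intro h j; rw [← claim2 j]; exact h j
  · intro h j; rw [claim2 j]; exact h j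

lemma fg_poly' {n : ℕ} {ι : Type} [Fintype ι] (v : ι → (Fin n → ℚ)) :
    ∃ (κ : Type) (_ : Fintype κ) (b : κ → (Fin n → ℚ)),
      ∀ x : Fin n → ℚ,
        (∃ lam : ι → ℚ, (∀ i, 0 ≤ lam i) ∧ x = ∑ i, lam i • v i) ↔
          ∀ j, b j ⬝ᵥ x ≤ 0 := by
  obtain ⟨κ, _, b, hb⟩ := fg_poly (fun i => v ((Fintype.equivFin ι).symm i))
  exact ⟨κ, inferInstance, b, fun x => by rw [← cone_reindex v x]; exact hb x⟩

/-- Minkowski–Weyl theorem: a convex cone `C ⊆ ℚ^n` is polyhedral iff it is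
finitely generated. -/
theorem minkowski_weyl (n : ℕ) (C : Set (Fin n → ℚ))
    (hcone : ∀ x ∈ C, ∀ lam : ℚ, 0 ≤ lam → lam • x ∈ C)
    (hconvex : ∀ x ∈ C, ∀ y ∈ C, x + y ∈ C) :
    (∃ (m : ℕ) (A : Matrix (Fin m) (Fin n) ℚ), C = {x | A.mulVec x ≤ 0}) ↔
      (∃ (k : ℕ) (v : Fin k → (Fin n → ℚ)),
        C = {x | ∃ lam : Fin k → ℚ, 0 ≤ lam ∧ x = ∑ i, lam i • v i}) := by
  classical
  constructor
  · rintro ⟨m, A, hA⟩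
    obtain ⟨κ, _, b, hb⟩ := fg_poly (fun i : Fin m => A i)
    obtain ⟨κ₂, _, w, hw⟩ := fg_poly' b
    refine ⟨Fintype.card κ, fun i => b ((Fintype.equivFin κ).symm i), ?_⟩
    ext x
    rw [hA]
    simp only [Set.mem_setOf_eq]
    have bridge : (∃ lam : Fin (Fintype.card κ) → ℚ, 0 ≤ lam ∧
          x = ∑ i, lam i • b ((Fintype.equivFin κ).symm i)) ↔
        (∃ lam : κ → ℚ, (∀ j, 0 ≤ lam j) ∧ x = ∑ j, lam j • b j) := by
      rw [← cone_reindex b x]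
      exact exists_congr (fun lam => and_congr_left' ⟨fun h i => h i, fun h i => h i⟩)
    rw [bridge]
    constructor
    · intro hx
      apply (hw x).mpr
      intro l
      obtain ⟨μ, hμpos, hμ⟩ := (hb (w l)).mpr (by
        intro j
        rw [dotProduct_comm]
        exact (hw (b j)).mp (gen_mem b j) l)
      rw [hμ, dotProduct_comm]; erw [dot_combo x μ (fun i => A i)]
      apply Finset.sum_nonpos
      intro i _
      have h1 : A i ⬝ᵥ x ≤ 0 := hx i
      have h2 : x ⬝ᵥ A i ≤ 0 := by rwa [dotProduct_comm]
      exact mul_nonpos_of_nonneg_of_nonpos (hμpos i) h2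
    · rintro ⟨lam, hlam, hx⟩
      intro i
      show A i ⬝ᵥ x ≤ 0
      rw [hx, dot_combo]
      apply Finset.sum_nonpos
      intro j _
      have h1 : b j ⬝ᵥ A i ≤ 0 := (hb (A i)).mp (gen_mem (fun i' : Fin m => A i') i) j
      have h2 : A i ⬝ᵥ b j ≤ 0 := by rwa [dotProduct_comm]
      exact mul_nonpos_of_nonneg_of_nonpos (hlam j) h2
  · rintro ⟨k, v, hv⟩
    obtain ⟨κ, _, b, hb⟩ := fg_poly v
    refine ⟨Fintype.card κ, Matrix.of (fun i => b ((Fintype.equivFin κ).symm i)), ?_⟩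
    ext x
    rw [hv]
    simp only [Set.mem_setOf_eq]
    constructor
    · rintro ⟨lam, hlam, hx⟩
      intro i
      exact (hb x).mp ⟨lam, fun i' => hlam i', hx⟩ ((Fintype.equivFin κ).symm i)
    · intro h
      obtain ⟨lam, hlam, hx⟩ := (hb x).mpr (by
        intro j
        have h2 : b ((Fintype.equivFin κ).symm ((Fintype.equivFin κ) j)) ⬝ᵥ x ≤ 0 :=
          h ((Fintype.equivFin κ) j)
        simpa using h2)
      exact ⟨lam, fun i => hlam i, hx⟩
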